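/- Let K be an algebraically closed field and R = M_n(K) with a grading by a group G. The following are equivalent: (1) dim R_g ≤ 1 for all g ∈ G; (2) dim R_e = 1, where e is the identity of G; (3) R is a graded division algebra (every nonzero homogeneous element is invertible). -/

import Mathlib

open Matrix Module

section aux

variable {K : Type*} [Field K] {G : Type*} [Group G] [DecidableEq G] {t : ℕ}
variable (ℬ : G → Submodule K (Matrix (Fin t) (Fin t) K)) [DirectSum.Decomposition ℬ]

noncomputable def projB (l : G) :
    Matrix (Fin t) (Fin t) K →ₗ[K] Matrix (Fin t) (Fin t) K :=
  (ℬ l).subtype ∘ₗ (DirectSum.component K G (fun g => ℬ g) l) ∘ₗ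
    (DirectSum.decomposeLinearEquiv ℬ).toLinearMap

lemma projB_apply (l : G) (r : Matrix (Fin t) (Fin t) K) :
    projB ℬ l r = (DirectSum.decompose ℬ r l : Matrix (Fin t) (Fin t) K) := rfl

lemma projB_same {l : G} {r : Matrix (Fin t) (Fin t) K} (h : r ∈ ℬ l) :
    projB ℬ l r = r := by
  rw [projB_apply, DirectSum.decompose_of_mem_same ℬ h]

lemma projB_ne {m l : G} {r : Matrix (Fin t) (Fin t) K} (h : r ∈ ℬ m) (hne : m ≠ l) :
    projB ℬ l r = 0 := by
  rw [projB_apply, DirectSum.decompose_of_mem_ne ℬ h hne]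

lemma mem_of_projB {g : G} {r : Matrix (Fin t) (Fin t) K}
    (h : ∀ l, l ≠ g → projB ℬ l r = 0) : r ∈ ℬ g := by
  classical
  have hs := DirectSum.sum_support_decompose ℬ r
  have : r = projB ℬ g r := by
    conv_lhs => rw [← hs]
    rw [Finset.sum_eq_single g]
    · exact (projB_apply ℬ g r).symm
    · intro l _ hl
      have := h l hl
      rw [projB_apply] at this
      exact this
    · intro hg
      rw [DFinsupp.notMem_support_iff] at hg
      simp [hg]
  rw [this, projB_apply]
  exact SetLike.coe_mem _

lemma projB_mul_left
    (hmul : ∀ (g h : G) (a b : Matrix (Fin t) (Fin t) K),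
      a ∈ ℬ g → b ∈ ℬ h → a * b ∈ ℬ (g * h))
    {g : G} {a : Matrix (Fin t) (Fin t) K} (ha : a ∈ ℬ g) (h : G)
    (b : Matrix (Fin t) (Fin t) K) :
    projB ℬ (g * h) (a * b) = a * projB ℬ h b := by
  refine DirectSum.Decomposition.inductionOn (ℳ := ℬ)
    (motive := fun b => projB ℬ (g * h) (a * b) = a * projB ℬ h b) ?_ ?_ ?_ b
  · simp
  · intro i m
    by_cases hih : i = h
    · subst hih
      rw [projB_same ℬ (hmul _ _ _ _ ha m.2), projB_same ℬ m.2]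
    · rw [projB_ne ℬ (hmul _ _ _ _ ha m.2) (by simpa using hih), projB_ne ℬ m.2 hih, mul_zero]
  · intro m m' hm hm'
    rw [mul_add, map_add, map_add, hm, hm', mul_add]

lemma key_sum (a : Matrix (Fin t) (Fin t) K) (i j : Fin t) :
    ∑ k, Matrix.single k i (1 : K) * (a * Matrix.single j k 1) = a i j • 1 := by
  ext p q
  rw [Matrix.sum_apply]
  rw [Finset.sum_eq_single p]
  · by_cases hq : q = p
    · subst hq
      simp [Matrix.one_apply]
    · simp [Matrix.one_apply, hq, Ne.symm hq]
  · intro k _ hk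
    simp [Ne.symm hk]
  · intro hp
    simp at hp

end aux
set_option linter.unusedSectionVars false

set_option maxHeartbeats 1000000 in
/-- For a grading by a group `G` on a matrix algebra over an
algebraically closed field, the following are equivalent: all homogeneous components
have dimension at most one; the identity component has dimension one; the grading is
a division grading. -/
theorem fine_grading_tfae
    {K : Type*} [Field K] [IsAlgClosed K] {G : Type*} [Group G] [DecidableEq G]
    {t : ℕ} (ht : 0 < t)
    (ℬ : G → Submodule K (Matrix (Fin t) (Fin t) K)) [DirectSum.Decomposition ℬ]
    (hmul : ∀ (g h : G) (a b : Matrix (Fin t) (Fin t) K),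
      a ∈ ℬ g → b ∈ ℬ h → a * b ∈ ℬ (g * h))
    (hone : (1 : Matrix (Fin t) (Fin t) K) ∈ ℬ 1) :
    List.TFAE
      [∀ g : G, Module.finrank K (ℬ g) ≤ 1,
       Module.finrank K (ℬ (1 : G)) = 1,
       ∀ (g : G) (a : Matrix (Fin t) (Fin t) K), a ∈ ℬ g → a ≠ 0 → IsUnit a] := by
  classical
  haveI : NeZero t := ⟨ht.ne'⟩
  have hR10 : (1 : Matrix (Fin t) (Fin t) K) ≠ 0 := by
    intro h
    have := congrFun (congrFun h ⟨0, ht⟩) ⟨0, ht⟩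
    simp [Matrix.one_apply] at this
  tfae_have 1 → 2
  · intro h1
    refine le_antisymm (h1 1) ?_
    have : Nontrivial (ℬ (1 : G)) := by
      refine ⟨⟨1, hone⟩, 0, ?_⟩
      intro hc
      exact hR10 (by simpa using congrArg Subtype.val hc)
    exact Module.finrank_pos_iff.mpr this
  tfae_have 2 → 3
  · intro h2 g a ha ha0
    -- the identity component is the line through 1
    have hBe : (Submodule.span K {(1 : Matrix (Fin t) (Fin t) K)}) = ℬ 1 := by
      refine Submodule.eq_of_le_of_finrank_le ?_ ?_
      · rw [Submodule.span_le, Set.singleton_subset_iff]; exact hone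
      · rw [h2, finrank_span_singleton hR10]
    obtain ⟨i, j, hij⟩ : ∃ i j, a i j ≠ 0 := by
      by_contra hc
      push_neg at hc
      exact ha0 (by ext i j; simp [hc i j])
    set S : Set (Matrix (Fin t) (Fin t) K) :=
      {r | ∃ h k x y, x ∈ ℬ h ∧ y ∈ ℬ k ∧ r = x * (a * y)} with hS
    set S1 : Set (Matrix (Fin t) (Fin t) K) :=
      {r | ∃ h k x y, x ∈ ℬ h ∧ y ∈ ℬ k ∧ h * (g * k) = 1 ∧ r = x * (a * y)} with hS1
    have hSmem : ∀ x y : Matrix (Fin t) (Fin t) K, x * (a * y) ∈ Submodule.span K S := by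
      intro x y
      have hx := DirectSum.sum_support_decompose ℬ x
      have hy := DirectSum.sum_support_decompose ℬ y
      have heq : x * (a * y)
          = ∑ h ∈ (DirectSum.decompose ℬ x).support,
              ∑ k ∈ (DirectSum.decompose ℬ y).support,
                (DirectSum.decompose ℬ x h : Matrix (Fin t) (Fin t) K) *
                  (a * (DirectSum.decompose ℬ y k : Matrix (Fin t) (Fin t) K)) := by
        conv_lhs => rw [← hx, ← hy]
        rw [Finset.sum_mul]
        refine Finset.sum_congr rfl fun h _ => ?_
        rw [Finset.mul_sum, Finset.mul_sum]
      rw [heq]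
      refine Submodule.sum_mem _ fun h _ => Submodule.sum_mem _ fun k _ => ?_
      exact Submodule.subset_span ⟨h, k, _, _, SetLike.coe_mem _, SetLike.coe_mem _, rfl⟩
    have h1M : (1 : Matrix (Fin t) (Fin t) K) ∈ Submodule.span K S := by
      have hsum := key_sum a i j
      have h1 : (1 : Matrix (Fin t) (Fin t) K)
          = (a i j)⁻¹ • ∑ k, Matrix.single k i (1 : K) * (a * Matrix.single j k 1) := by
        rw [hsum, smul_smul, inv_mul_cancel₀ hij, one_smul]
      rw [h1]
      exact Submodule.smul_mem _ _ (Submodule.sum_mem _ fun k _ => hSmem _ _)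
    have hmapN : Submodule.map (projB ℬ 1) (Submodule.span K S) ≤ Submodule.span K S1 := by
      rw [Submodule.map_span, Submodule.span_le]
      rintro _ ⟨r, ⟨h, k, x, y, hx, hy, rfl⟩, rfl⟩
      have hmem : x * (a * y) ∈ ℬ (h * (g * k)) :=
        hmul _ _ _ _ hx (hmul _ _ _ _ ha hy)
      by_cases hh : h * (g * k) = 1
      · rw [hh] at hmem
        rw [projB_same ℬ hmem]
        exact Submodule.subset_span ⟨h, k, x, y, hx, hy, hh, rfl⟩
      · rw [projB_ne ℬ hmem hh]
        exact Submodule.zero_mem _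
    have h1N : (1 : Matrix (Fin t) (Fin t) K) ∈ Submodule.span K S1 := by
      have : projB ℬ 1 1 = 1 := projB_same ℬ hone
      exact hmapN ⟨1, h1M, this⟩
    obtain ⟨r, hrS1, hr0⟩ : ∃ r ∈ S1, r ≠ 0 := by
      by_contra hc
      push_neg at hc
      have : Submodule.span K S1 ≤ ⊥ := Submodule.span_le.mpr fun r hr => by
        simp [hc r hr]
      exact hR10 (by simpa using this h1N)
    obtain ⟨h, k, x, y, hx, hy, hhk, rfl⟩ := hrS1
    have hmem : x * (a * y) ∈ ℬ 1 := by
      have := hmul _ _ _ _ hx (hmul _ _ _ _ ha hy)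
      rwa [hhk] at this
    rw [← hBe, Submodule.mem_span_singleton] at hmem
    obtain ⟨lam, hlam⟩ := hmem
    have hlam0 : lam ≠ 0 := by
      rintro rfl
      rw [← hlam] at hr0
      simp at hr0
    have hinv : (lam⁻¹ • x) * (a * y) = 1 := by
      rw [smul_mul_assoc, ← hlam, smul_smul, inv_mul_cancel₀ hlam0, one_smul]
    have hinv2 : a * (y * (lam⁻¹ • x)) = 1 := by
      have h' := mul_eq_one_comm.mp hinv
      rw [mul_assoc] at h'
      exact h'
    have hinv3 : (y * (lam⁻¹ • x)) * a = 1 := mul_eq_one_comm.mp hinv2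
    exact ⟨⟨a, y * (lam⁻¹ • x), hinv2, hinv3⟩, rfl⟩
  tfae_have 3 → 1
  · intro h3 g
    by_cases hbot : ℬ g = ⊥
    · rw [hbot]
      simp
    · obtain ⟨a, ha, ha0⟩ := Submodule.exists_mem_ne_zero_of_ne_bot hbot
      obtain ⟨u, rfl⟩ := h3 g a ha ha0
      set b : Matrix (Fin t) (Fin t) K := ↑u⁻¹ with hb
      have hub : (u : Matrix (Fin t) (Fin t) K) * b = 1 := by
        rw [hb]; exact_mod_cast u.mul_inv
      have hbu : b * (u : Matrix (Fin t) (Fin t) K) = 1 := by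
        rw [hb]; exact_mod_cast u.inv_mul
      have hbmem : b ∈ ℬ g⁻¹ := by
        refine mem_of_projB ℬ fun l hl => ?_
        have h1 : projB ℬ (g * l) ((u : Matrix (Fin t) (Fin t) K) * b)
            = (u : Matrix (Fin t) (Fin t) K) * projB ℬ l b :=
          projB_mul_left ℬ hmul ha l b
        have h2 : projB ℬ (g * l) ((u : Matrix (Fin t) (Fin t) K) * b) = 0 := by
          rw [hub]
          exact projB_ne ℬ hone fun hc => hl (eq_inv_of_mul_eq_one_right hc.symm)
        have h3' : (u : Matrix (Fin t) (Fin t) K) * projB ℬ l b = 0 := by rw [← h1, h2]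
        calc projB ℬ l b = b * ((u : Matrix (Fin t) (Fin t) K) * projB ℬ l b) := by
              rw [← mul_assoc, hbu, one_mul]
          _ = 0 := by rw [h3', mul_zero]
      -- every element of ℬ g is a multiple of a
      have hspan : ℬ g ≤ Submodule.span K {(u : Matrix (Fin t) (Fin t) K)} := by
        intro c hc
        have hd : c * b ∈ ℬ 1 := by
          have := hmul _ _ _ _ hc hbmem
          rwa [mul_inv_cancel] at this
        -- find an eigenvalue of c * b
        haveI : Nontrivial (Fin t → K) := ⟨0, fun _ => 1, by
          intro hcon
          have := congrFun hcon ⟨0, ht⟩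
          simp at this⟩
        obtain ⟨mu, hmu⟩ := Module.End.exists_eigenvalue (Matrix.toLin' (c * b))
        obtain ⟨v, hv⟩ := Module.End.HasEigenvalue.exists_hasEigenvector hmu
        have hmv : (c * b).mulVec v = mu • v := by
          have := hv.apply_eq_smul
          rwa [Matrix.toLin'_apply] at this
        have hzero : c * b - mu • 1 = 0 := by
          by_contra hne
          have hmem2 : c * b - mu • 1 ∈ ℬ 1 := sub_mem hd (Submodule.smul_mem _ _ hone)
          obtain ⟨w, hw⟩ := h3 1 _ hmem2 hne
          have hkill : (c * b - mu • 1).mulVec v = 0 := by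
            rw [Matrix.sub_mulVec, hmv, Matrix.smul_mulVec, Matrix.one_mulVec, sub_self]
          have hv0 : v = 0 := by
            have hw' : (↑w⁻¹ : Matrix (Fin t) (Fin t) K) * (c * b - mu • 1) = 1 := by
              rw [← hw]; exact_mod_cast w.inv_mul
            calc v = (1 : Matrix (Fin t) (Fin t) K).mulVec v := by
                  rw [Matrix.one_mulVec]
              _ = ((↑w⁻¹ : Matrix (Fin t) (Fin t) K) * (c * b - mu • 1)).mulVec v := by
                  rw [hw']
              _ = (↑w⁻¹ : Matrix (Fin t) (Fin t) K).mulVec ((c * b - mu • 1).mulVec v) := by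
                  rw [Matrix.mulVec_mulVec]
              _ = 0 := by rw [hkill, Matrix.mulVec_zero]
          exact hv.2 hv0
        have hcb : c * b = mu • 1 := by rwa [sub_eq_zero] at hzero
        have hc' : c = mu • (u : Matrix (Fin t) (Fin t) K) := by
          calc c = c * (b * (u : Matrix (Fin t) (Fin t) K)) := by rw [hbu, mul_one]
            _ = (c * b) * (u : Matrix (Fin t) (Fin t) K) := by rw [mul_assoc]
            _ = mu • (u : Matrix (Fin t) (Fin t) K) := by rw [hcb, smul_mul_assoc, one_mul]
        rw [Submodule.mem_span_singleton]
        exact ⟨mu, hc'.symm⟩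
      calc Module.finrank K (ℬ g)
          ≤ Module.finrank K (Submodule.span K {(u : Matrix (Fin t) (Fin t) K)}) :=
            Submodule.finrank_mono hspan
        _ = 1 := finrank_span_singleton ha0
  tfae_finish
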